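/- For all n ≥ k ≥ 1, the (q,ᾱ)-Whitney numbers of the second kind satisfy W_{q,m,ᾱ}(n+1,k) = W_{q,m,ᾱ}(n,k−1) + [α_k + k·m]_q · W_{q,m,ᾱ}(n,k), and W_{q,m,ᾱ}(n,0) = [α_0]_q^n. -/

import Mathlib

open Polynomial Finset

/-- The q-number `[x]_q = (1 - q^x)/(1 - q)` (real exponent via rpow). -/
noncomputable def qnum (q x : ℝ) : ℝ := (1 - q ^ x) / (1 - q)

private noncomputable def pb (c : ℕ → ℝ) (k : ℕ) : Polynomial ℝ :=
  ∏ j ∈ Finset.range k, (Polynomial.X - Polynomial.C (c j))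

private lemma pb_monic (c : ℕ → ℝ) (k : ℕ) : (pb c k).Monic :=
  monic_prod_of_monic _ _ fun j _ => monic_X_sub_C (c j)

private lemma pb_natDegree (c : ℕ → ℝ) (k : ℕ) : (pb c k).natDegree = k := by
  unfold pb
  rw [Polynomial.natDegree_prod]
  · simp
  · intro i _; exact X_sub_C_ne_zero (c i)

private lemma indep (c : ℕ → ℝ) : ∀ N (d : ℕ → ℝ),
    (∑ k ∈ Finset.range N, Polynomial.C (d k) * pb c k) = 0 → ∀ k < N, d k = 0 := by
  intro N
  induction N with
  | zero => intro d _ k hk; omega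
  | succ N ih =>
    intro d hsum k hk
    have hdN : d N = 0 := by
      have h := congrArg (fun p => Polynomial.coeff p N) hsum
      simp only [finset_sum_coeff, coeff_C_mul, coeff_zero] at h
      rw [Finset.sum_range_succ] at h
      have h0 : ∀ j ∈ Finset.range N, d j * (pb c j).coeff N = 0 := by
        intro j hj
        rw [coeff_eq_zero_of_natDegree_lt, mul_zero]
        rw [pb_natDegree]; exact Finset.mem_range.mp hj
      rw [Finset.sum_eq_zero h0, zero_add] at h
      have hc1 : (pb c N).coeff N = 1 := by
        have := (pb_monic c N).coeff_natDegree
        rwa [pb_natDegree] at this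
      rwa [hc1, mul_one] at h
    rcases Nat.lt_succ_iff_lt_or_eq.mp hk with h | h
    · apply ih d _ k h
      rw [Finset.sum_range_succ, hdN] at hsum
      simpa using hsum
    · rw [h]; exact hdN

theorem stmt4 (q m : ℝ) (α : ℕ → ℝ) (hq0 : 0 < q) (hq1 : q < 1)
    (W : ℕ → ℕ → ℝ)
    (hW : ∀ n : ℕ, (Polynomial.X : Polynomial ℝ) ^ n
      = ∑ k ∈ Finset.range (n + 1), Polynomial.C (W n k) * ∏ j ∈ Finset.range k, (Polynomial.X - Polynomial.C (qnum q (α j + j * m))))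
    (n k : ℕ) (hk1 : 1 ≤ k) (hkn : k ≤ n) :
    W (n + 1) k = W n (k - 1) + qnum q (α k + k * m) * W n k ∧
    W n 0 = (qnum q (α 0)) ^ n := by
  set c : ℕ → ℝ := fun j => qnum q (α j + j * m) with hc
  have hW' : ∀ n : ℕ, (Polynomial.X : Polynomial ℝ) ^ n
      = ∑ k ∈ Finset.range (n + 1), Polynomial.C (W n k) * pb c k := hW
  have hc0 : c 0 = qnum q (α 0) := by simp [hc]
  constructor
  · -- recurrence
    set b : ℕ → ℝ := fun j =>
      (if j = 0 then 0 else W n (j - 1)) + (if j ≤ n then c j * W n j else 0) with hb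
    have hbsum : ∑ j ∈ Finset.range (n + 2), Polynomial.C (b j) * pb c j
        = (Polynomial.X : Polynomial ℝ) ^ (n + 1) := by
      have split : ∑ j ∈ Finset.range (n + 2), Polynomial.C (b j) * pb c j
          = (∑ j ∈ Finset.range (n + 2),
              Polynomial.C (if j = 0 then 0 else W n (j - 1)) * pb c j)
          + ∑ j ∈ Finset.range (n + 2),
              Polynomial.C (if j ≤ n then c j * W n j else 0) * pb c j := by
        rw [← Finset.sum_add_distrib]
        refine Finset.sum_congr rfl fun j _ => ?_
        rw [hb]; simp [C_add, add_mul]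
      rw [split, Finset.sum_range_succ' _ (n + 1),
        Finset.sum_range_succ (fun j => Polynomial.C (if j ≤ n then c j * W n j else 0) * pb c j) (n + 1)]
      simp only [if_neg (Nat.succ_ne_zero _), Nat.add_sub_cancel, if_pos (le_refl n),
        if_neg (by omega : ¬ n + 1 ≤ n), reduceIte, map_zero, zero_mul, add_zero]
      have h2 : ∀ x ∈ Finset.range (n + 1),
          Polynomial.C (if x ≤ n then c x * W n x else 0) * pb c x
          = Polynomial.C (c x * W n x) * pb c x := fun x hx => by
        rw [if_pos (Nat.lt_succ_iff.mp (Finset.mem_range.mp hx))]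
      rw [Finset.sum_congr rfl h2]
      have heq : ∀ j ∈ Finset.range (n + 1),
          Polynomial.C (W n j) * pb c (j + 1)
          = Polynomial.C (W n j) * pb c j * Polynomial.X
            - Polynomial.C (c j * W n j) * pb c j := by
        intro j _
        have hp : pb c (j + 1) = pb c j * (Polynomial.X - Polynomial.C (c j)) := by
          rw [pb, pb, Finset.prod_range_succ]
        rw [hp, C_mul]; ring
      rw [Finset.sum_congr rfl heq, Finset.sum_sub_distrib]
      have hXn := hW' n
      rw [← Finset.sum_mul, ← hXn]
      ring
    have hzero : ∑ j ∈ Finset.range (n + 2),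
        Polynomial.C (W (n + 1) j - b j) * pb c j = 0 := by
      have := hW' (n + 1)
      simp only [C_sub, sub_mul, Finset.sum_sub_distrib]
      rw [← this, hbsum, sub_self]
    have hkey := indep c (n + 2) _ hzero k (by omega)
    have : W (n + 1) k = b k := by linarith [hkey]
    rw [this, hb]
    simp only [if_neg (by omega : ¬ k = 0), if_pos hkn]
    rfl
  · -- W n 0 = (c 0)^n
    have h := congrArg (Polynomial.eval (c 0)) (hW' n)
    simp only [eval_pow, eval_X, eval_finset_sum, eval_mul, eval_C] at h
    have hval : ∀ j ∈ Finset.range (n + 1),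
        W n j * (pb c j).eval (c 0) = if j = 0 then W n 0 else 0 := by
      intro j _
      rcases Nat.eq_zero_or_pos j with hj | hj
      · subst hj; simp [pb]
      · rw [if_neg (by omega)]
        have : (pb c j).eval (c 0) = 0 := by
          rw [pb, Polynomial.eval_prod]
          exact Finset.prod_eq_zero (Finset.mem_range.mpr hj) (by simp)
        rw [this, mul_zero]
    rw [Finset.sum_congr rfl hval, Finset.sum_ite_eq' _ 0] at h
    simp only [Finset.mem_range] at h
    rw [if_pos (by omega : 0 < n + 1)] at h
    rw [← hc0, ← h]
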